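/- Let α be a non-zero algebraic integer of degree d with conjugates α = α_1, …, α_d. If there exist indices i, j and positive integers r and s such that α_i^r = α_j^s, then either r = s or α is a root of unity. -/

import Mathlib

open Polynomial

/-- **Lemma 5 (Dobrowolski).** Let `α` be a non-zero algebraic integer of degree `d`
with conjugates `α = α₁, …, α_d` (the roots in `ℂ` of its minimal polynomial over `ℚ`).
If there are indices `i, j` and positive integers `r, s` with `αᵢ^r = αⱼ^s`, then
either `r = s` or `α` is a root of unity. -/
theorem conjugate_power_eq
    (α : ℂ) (hα : α ≠ 0) (hint : IsIntegral ℤ α)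
    (d : ℕ) (hd : (minpoly ℚ α).natDegree = d)
    (αs : Fin d → ℂ)
    (hconj : (minpoly ℚ α).map (algebraMap ℚ ℂ)
      = ∏ i, (Polynomial.X - Polynomial.C (αs i)))
    (i j : Fin d) (r s : ℕ) (hr : 0 < r) (hs : 0 < s)
    (h : αs i ^ r = αs j ^ s) :
    r = s ∨ ∃ n : ℕ, 0 < n ∧ α ^ n = 1 := by
  rcases eq_or_ne r s with hrs | hrs
  · exact Or.inl hrs
  right
  set p := minpoly ℚ α with hp
  have hintQ : IsIntegral ℚ α := hint.tower_top
  have hp0 : p ≠ 0 := minpoly.ne_zero hintQ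
  have hirr : Irreducible p := minpoly.irreducible hintQ
  have hmonic : p.Monic := minpoly.monic hintQ
  -- every αs k is a root of p
  have hroot : ∀ k : Fin d, Polynomial.aeval (αs k) p = 0 := by
    intro k
    have : (p.map (algebraMap ℚ ℂ)).eval (αs k) = 0 := by
      rw [hconj]
      rw [Polynomial.eval_prod]
      exact Finset.prod_eq_zero (Finset.mem_univ k) (by simp)
    rwa [Polynomial.eval_map, ← Polynomial.aeval_def] at this
  -- every αs k is nonzero
  have hne : ∀ k : Fin d, αs k ≠ 0 := by
    intro k hk
    have hco : p.coeff 0 ≠ 0 := minpoly.coeff_zero_ne_zero hintQ hα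
    have h0 : Polynomial.aeval (0 : ℂ) p = 0 := hk ▸ hroot k
    rw [Polynomial.aeval_def, Polynomial.eval₂_at_zero] at h0
    exact hco ((_root_.map_eq_zero (algebraMap ℚ ℂ)).mp h0)
  -- p splits in ℂ
  have hsplits : (p.map (algebraMap ℚ ℂ)).Splits := by
    rw [hconj]
    exact Polynomial.Splits.prod fun k _ => Polynomial.Splits.X_sub_C _
  -- the splitting field inside ℂ
  set L := IntermediateField.adjoin ℚ (p.rootSet ℂ) with hL
  have hsf : Polynomial.IsSplittingField ℚ L p :=
    IntermediateField.adjoin_rootSet_isSplittingField hsplits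
  have hnormal : Normal ℚ L := Normal.of_isSplittingField p
  have hfd : FiniteDimensional ℚ L := Polynomial.IsSplittingField.finiteDimensional L p
  have hmem : ∀ k : Fin d, αs k ∈ L := fun k =>
    IntermediateField.subset_adjoin ℚ _ (Polynomial.mem_rootSet.mpr ⟨hp0, hroot k⟩)
  set x : L := ⟨αs i, hmem i⟩ with hx
  set y : L := ⟨αs j, hmem j⟩ with hy
  -- roots of p inside L
  have haev : ∀ z : L, Polynomial.aeval (z : ℂ) p = 0 → Polynomial.aeval z p = 0 := by
    intro z hz
    have : algebraMap L ℂ (Polynomial.aeval z p) = 0 := by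
      rw [← Polynomial.aeval_algebraMap_apply]; exact hz
    exact (algebraMap L ℂ).injective (by rwa [map_zero])
  have haevx : Polynomial.aeval x p = 0 := haev x (hroot i)
  have haevy : Polynomial.aeval y p = 0 := haev y (hroot j)
  have hminy : minpoly ℚ y = p :=
    (minpoly.eq_of_irreducible_of_monic hirr haevy hmonic).symm
  have halgy : IsAlgebraic ℚ y := ⟨p, hp0, haevy⟩
  obtain ⟨σ, hσ⟩ := minpoly.exists_algEquiv_of_root halgy (show Polynomial.aeval x (minpoly ℚ y) = 0 by rw [hminy]; exact haevx)
  -- iterate the relation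
  have hxy : x ^ r = (σ x) ^ s := by
    rw [hσ]
    apply Subtype.ext
    push_cast
    exact h
  have key : ∀ m : ℕ, x ^ (r ^ m) = ((σ ^ m) x) ^ (s ^ m) := by
    intro m
    induction m with
    | zero => simp
    | succ m ih =>
      have step : ((σ ^ m) x) ^ r = ((σ ^ (m + 1)) x) ^ s := by
        have := congrArg (σ ^ m) hxy
        rw [map_pow, map_pow] at this
        rw [this, pow_succ, AlgEquiv.mul_apply]
      calc x ^ r ^ (m + 1) = (x ^ r ^ m) ^ r := by rw [← pow_mul, ← pow_succ]
        _ = (((σ ^ m) x) ^ (s ^ m)) ^ r := by rw [ih]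
        _ = (((σ ^ m) x) ^ r) ^ (s ^ m) := by rw [← pow_mul, mul_comm, pow_mul]
        _ = (((σ ^ (m + 1)) x) ^ s) ^ (s ^ m) := by rw [step]
        _ = ((σ ^ (m + 1)) x) ^ s ^ (m + 1) := by
            rw [← pow_mul, mul_comm, ← pow_succ]
  set m := orderOf σ with hm
  have hm0 : 0 < m := orderOf_pos σ
  have hfix : x ^ (r ^ m) = x ^ (s ^ m) := by
    have := key m
    rwa [pow_orderOf_eq_one σ, AlgEquiv.one_apply] at this
  have hx0 : x ≠ 0 := fun h0 => hne i (by simpa [hx] using congrArg (Subtype.val) h0)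
  -- from x^(a) = x^(b) with a ≠ b, x is a root of unity
  have hxunit : ∃ n : ℕ, 0 < n ∧ x ^ n = 1 := by
    have hab : r ^ m ≠ s ^ m := fun hab => hrs (Nat.pow_left_injective hm0.ne' hab)
    rcases lt_or_gt_of_ne hab with hlt | hlt
    · refine ⟨s ^ m - r ^ m, Nat.sub_pos_of_lt hlt, ?_⟩
      have : x ^ (r ^ m) * x ^ (s ^ m - r ^ m) = x ^ (r ^ m) * 1 := by
        rw [← pow_add, Nat.add_sub_cancel' hlt.le, mul_one, ← hfix]
      exact mul_left_cancel₀ (pow_ne_zero _ hx0) this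
    · refine ⟨r ^ m - s ^ m, Nat.sub_pos_of_lt hlt, ?_⟩
      have : x ^ (s ^ m) * x ^ (r ^ m - s ^ m) = x ^ (s ^ m) * 1 := by
        rw [← pow_add, Nat.add_sub_cancel' hlt.le, mul_one, ← hfix]
      exact mul_left_cancel₀ (pow_ne_zero _ hx0) this
  obtain ⟨n, hn0, hxn⟩ := hxunit
  refine ⟨n, hn0, ?_⟩
  -- transfer to α via minpoly divisibility
  have hin : (αs i) ^ n = 1 := by
    have := congrArg (Subtype.val) hxn
    push_cast at this
    exact this
  have hminx : minpoly ℚ (αs i) = p :=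
    (minpoly.eq_of_irreducible_of_monic hirr (hroot i) hmonic).symm
  have hdvd : p ∣ (Polynomial.X ^ n - 1 : ℚ[X]) := by
    rw [← hminx]
    apply minpoly.dvd
    simp [hin]
  obtain ⟨q, hq⟩ := hdvd
  have : Polynomial.aeval α ((Polynomial.X ^ n - 1 : ℚ[X])) = 0 := by
    rw [hq, map_mul, minpoly.aeval, zero_mul]
  simpa [sub_eq_zero] using this
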